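/- Let $n \ge 1$ and $0 < \lambda < n$. There exist constants $0 < c \le C$, depending only on $n$ and $\lambda$, such that for every radial, decreasing function $f$ on $\mathbb{R}^n$, i.e. $f(x) = \varphi(|x|)$ with $\varphi$ nonnegative and nonincreasing on $(0,\infty)$, one has $$c\, \sup_{x>0} x^{\lambda - n} \int_0^x \varphi(\rho)\, \rho^{n-1} \ln\left(\frac{x}{\rho}\right) d\rho \;\le\; \|Mf\|_{\mathcal{M}_{1,\lambda}} \;\le\; C\, \sup_{x>0} x^{\lambda - n} \int_0^x \varphi(\rho)\, \rho^{n-1} \ln\left(\frac{x}{\rho}\right) d\rho,$$ where $Mf$ is the Hardy–Littlewood maximal function of $f$. -/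

import Mathlib

open MeasureTheory Set
open scoped ENNReal NNReal

/-- The Hardy–Littlewood maximal function `Mf(x) = sup_{B ∋ x} |B|⁻¹ ∫_B |f|`,
supremum over open balls containing `x`, valued in `ℝ≥0∞`. -/
noncomputable def maximalFn (n : ℕ) (f : EuclideanSpace ℝ (Fin n) → ℝ)
    (x : EuclideanSpace ℝ (Fin n)) : ℝ≥0∞ :=
  ⨆ (z : EuclideanSpace ℝ (Fin n)) (r : ℝ) (_ : 0 < r) (_ : x ∈ Metric.ball z r),
    (volume (Metric.ball z r))⁻¹ * ∫⁻ y in Metric.ball z r, ‖f y‖₊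

/-- The Morrey "norm" of an `ℝ≥0∞`-valued function:
`‖g‖_{M_{1,λ}} = sup_{x ∈ ℝⁿ, r > 0} r^{λ-n} ∫_{B(x,r)} g`. -/
noncomputable def morreyNormE (n : ℕ) (lam : ℝ) (g : EuclideanSpace ℝ (Fin n) → ℝ≥0∞) : ℝ≥0∞ :=
  ⨆ (x : EuclideanSpace ℝ (Fin n)) (r : ℝ) (_ : 0 < r),
    ENNReal.ofReal (r ^ (lam - (n:ℝ))) * ∫⁻ y in Metric.ball x r, g y


open Metric

namespace Stmt4


theorem lintegral_fun_norm_addHaar' {E : Type*} [NormedAddCommGroup E] [NormedSpace ℝ E]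
    [MeasurableSpace E] [BorelSpace E] [Nontrivial E] [FiniteDimensional ℝ E]
    (μ : Measure E) [μ.IsAddHaarMeasure] (g : ℝ → ℝ≥0∞) (hg : Measurable g) :
    ∫⁻ x, g ‖x‖ ∂μ = (Module.finrank ℝ E) * μ (Metric.ball 0 1) *
      ∫⁻ y in Set.Ioi (0:ℝ), ENNReal.ofReal (y ^ (Module.finrank ℝ E - 1)) * g y :=
  calc
    ∫⁻ x, g ‖x‖ ∂μ = ∫⁻ x : ({(0:E)}ᶜ : Set E), g ‖x.1‖ ∂(μ.comap (↑)) := by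
      rw [lintegral_subtype_comap (measurableSet_singleton (0:E)).compl (fun a => g ‖a‖),
        restrict_compl_singleton]
    _ = ∫⁻ p : sphere (0:E) 1 × Ioi (0:ℝ), g p.2.1
        ∂(μ.toSphere.prod (.volumeIoiPow (Module.finrank ℝ E - 1))) := by
      rw [← μ.measurePreserving_homeomorphUnitSphereProd.lintegral_comp_emb
        (Homeomorph.measurableEmbedding _) (fun p => g p.2.1)]
      simp
    _ = μ.toSphere univ * ∫⁻ y : Ioi (0:ℝ), g y.1 ∂(.volumeIoiPow (Module.finrank ℝ E - 1)) := by
      rw [lintegral_prod (fun p : sphere (0:E) 1 × Ioi (0:ℝ) => g p.2.1)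
        ((hg.comp (measurable_subtype_coe.comp measurable_snd)).aemeasurable)]
      simp [lintegral_const, mul_comm]
    _ = _ := by
      rw [Measure.toSphere_apply_univ, Measure.volumeIoiPow,
        lintegral_withDensity_eq_lintegral_mul _
          (f := fun r : Ioi (0:ℝ) => ENNReal.ofReal (r.1 ^ (Module.finrank ℝ E - 1)))
          (g := fun r : Ioi (0:ℝ) => g r.1)
          (by fun_prop) (by fun_prop)]
      simp only [Pi.mul_apply]
      rw [lintegral_subtype_comap measurableSet_Ioi
        (fun a : ℝ => ENNReal.ofReal (a ^ (Module.finrank ℝ E - 1)) * g a)]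

/-- `I n φ R = ∫_0^R φ(ρ) ρ^(n-1) dρ`. -/
noncomputable def If (n : ℕ) (φ : ℝ → ℝ) (R : ℝ) : ℝ≥0∞ :=
  ∫⁻ ρ in Ioo (0:ℝ) R, ENNReal.ofReal (φ ρ * ρ ^ (n-1))

/-- `L n φ x = ∫_0^x φ(ρ) ρ^(n-1) log(x/ρ) dρ`. -/
noncomputable def Lf (n : ℕ) (φ : ℝ → ℝ) (x : ℝ) : ℝ≥0∞ :=
  ∫⁻ ρ in Ioo (0:ℝ) x, ENNReal.ofReal (φ ρ * ρ ^ (n-1) * Real.log (x/ρ))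

noncomputable def Sf (n : ℕ) (lam : ℝ) (φ : ℝ → ℝ) : ℝ≥0∞ :=
  ⨆ (x : ℝ) (_ : 0 < x), ENNReal.ofReal (x ^ (lam - (n:ℝ))) * Lf n φ x

noncomputable def Gf (n : ℕ) (φ : ℝ → ℝ) (s : ℝ) : ℝ≥0∞ :=
  ⨆ (t : ℝ) (_ : s ≤ t ∧ 0 < t), (ENNReal.ofReal (t^n))⁻¹ * If n φ t

theorem If_mono (n : ℕ) (φ : ℝ → ℝ) : Monotone (If n φ) := fun a b hab =>
  lintegral_mono' (Measure.restrict_mono (Ioo_subset_Ioo_right hab) le_rfl) le_rfl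

theorem If_meas (n : ℕ) (φ : ℝ → ℝ) : Measurable (If n φ) := (If_mono n φ).measurable

theorem Gf_anti (n : ℕ) (φ : ℝ → ℝ) : Antitone (Gf n φ) := fun a b hab =>
  iSup_le fun t => iSup_le fun ht => le_iSup_of_le t (le_iSup_of_le ⟨hab.trans ht.1, ht.2⟩ le_rfl)

theorem Gf_meas (n : ℕ) (φ : ℝ → ℝ) : Measurable (Gf n φ) := (Gf_anti n φ).measurable

theorem lintegral_inv_Ioo (a b : ℝ) (h : 0 < a) (hab : a < b) :
    ∫⁻ ρ in Ioo a b, ENNReal.ofReal ρ⁻¹ = ENNReal.ofReal (Real.log (b/a)) := by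
  have hint : IntervalIntegrable (fun x : ℝ => x⁻¹) volume a b :=
    intervalIntegral.intervalIntegrable_inv (fun x hx => by
      rw [uIcc_of_le hab.le] at hx
      exact (lt_of_lt_of_le h hx.1).ne') (by fun_prop)
  rw [← ofReal_integral_eq_lintegral_ofReal]
  · congr 1
    rw [← integral_Ioc_eq_integral_Ioo, ← intervalIntegral.integral_of_le hab.le,
      integral_inv (by rw [uIcc_of_le hab.le]; intro hx; linarith [hx.1])]
  · exact (hint.1.mono_set Ioo_subset_Ioc_self)
  · filter_upwards [ae_restrict_mem measurableSet_Ioo] with x hx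
    exact inv_nonneg.2 (le_of_lt (h.trans hx.1))

theorem lintegral_pow_Ioo (n : ℕ) (hn : 1 ≤ n) (a : ℝ) (ha : 0 < a) :
    ∫⁻ t in Ioo (0:ℝ) a, ENNReal.ofReal (t^(n-1)) = ENNReal.ofReal (a^n / n) := by
  rw [← ofReal_integral_eq_lintegral_ofReal]
  · congr 1
    rw [← integral_Ioc_eq_integral_Ioo, ← intervalIntegral.integral_of_le ha.le,
      integral_pow, Nat.sub_add_cancel hn, zero_pow (by omega : n ≠ 0), sub_zero]
    congr 1
    push_cast [Nat.cast_sub hn]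
    ring
  · exact ((intervalIntegral.intervalIntegrable_pow (n-1)).1.mono_set Ioo_subset_Ioc_self)
  · filter_upwards [ae_restrict_mem measurableSet_Ioo] with x hx
    exact pow_nonneg hx.1.le _


/-- Polar coordinates for a lintegral of a radial function over a ball centred at the origin. -/
theorem polar_ball {n : ℕ} (hn : 1 ≤ n) (g : ℝ → ℝ≥0∞) (hg : Measurable g) (R : ℝ) :
    ∫⁻ y in Metric.ball (0 : EuclideanSpace ℝ (Fin n)) R, g ‖y‖
      = n * volume (Metric.ball (0 : EuclideanSpace ℝ (Fin n)) 1) *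
        ∫⁻ ρ in Ioo (0:ℝ) R, ENNReal.ofReal (ρ^(n-1)) * g ρ := by
  haveI : Nonempty (Fin n) := ⟨⟨0, hn⟩⟩
  rcases le_or_gt R 0 with hR | hR
  · rw [Metric.ball_eq_empty.2 hR,
      Ioo_eq_empty (by intro h; exact absurd (h.trans_le hR) (lt_irrefl _))]
    simp
  · set E := EuclideanSpace ℝ (Fin n) with hE
    set h : ℝ → ℝ≥0∞ := (Ioo (0:ℝ) R).indicator g with hh
    have hhm : Measurable h := hg.indicator measurableSet_Ioo
    have key := lintegral_fun_norm_addHaar' (volume : Measure E) h hhm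
    have hrank : Module.finrank ℝ E = n := finrank_euclideanSpace_fin
    rw [hrank] at key
    have e1 : ∫⁻ y : E, h ‖y‖ ∂volume
        = ∫⁻ y in Metric.ball (0 : E) R, g ‖y‖ := by
      have : (fun y : E => h ‖y‖)
          = (Metric.ball (0:E) R \ {0}).indicator (fun y => g ‖y‖) := by
        funext y
        by_cases hy : ‖y‖ ∈ Ioo (0:ℝ) R
        · rw [hh, indicator_of_mem hy, indicator_of_mem]
          refine ⟨?_, ?_⟩
          · rw [Metric.mem_ball, dist_zero_right]; exact hy.2
          · simp only [mem_singleton_iff]; intro h0; rw [h0] at hy; simp at hy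
        · rw [hh, indicator_of_notMem hy, indicator_of_notMem]
          intro hmem
          exact hy ⟨norm_pos_iff.2 (by simpa using hmem.2), by
            have := hmem.1; rwa [Metric.mem_ball, dist_zero_right] at this⟩
      rw [this, lintegral_indicator (measurableSet_ball.diff (measurableSet_singleton _))]
      refine setLIntegral_congr ?_
      rw [diff_ae_eq_self]
      exact measure_mono_null (inter_subset_right) (measure_singleton _)
    have e2 : ∫⁻ y in Ioi (0:ℝ), ENNReal.ofReal (y ^ (n - 1)) * h y
        = ∫⁻ ρ in Ioo (0:ℝ) R, ENNReal.ofReal (ρ^(n-1)) * g ρ := by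
      have : (fun y => ENNReal.ofReal (y ^ (n - 1)) * h y)
          = (Ioo (0:ℝ) R).indicator (fun ρ => ENNReal.ofReal (ρ^(n-1)) * g ρ) := by
        funext y
        by_cases hy : y ∈ Ioo (0:ℝ) R
        · rw [hh, indicator_of_mem hy, indicator_of_mem hy]
        · rw [hh, indicator_of_notMem hy, indicator_of_notMem hy, mul_zero]
      rw [this, ← lintegral_indicator measurableSet_Ioi]
      rw [← lintegral_indicator measurableSet_Ioo]
      congr 1
      funext y
      rw [indicator_indicator, inter_eq_right.2 (fun x hx => hx.1)]
    rw [← e1, key, e2]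


/-- `∫_0^R I(ρ)/ρ dρ = L(R)`. -/
theorem tonelli {n : ℕ} {φ : ℝ → ℝ} (hφ : Measurable φ) (h0 : ∀ ρ, 0 ≤ φ ρ)
    {R : ℝ} (hR : 0 < R) :
    ∫⁻ ρ in Ioo (0:ℝ) R, ENNReal.ofReal ρ⁻¹ * If n φ ρ = Lf n φ R := by
  set F : ℝ → ℝ≥0∞ := fun t => ENNReal.ofReal (φ t * t^(n-1)) with hF
  have hFm : Measurable F := by fun_prop
  have hFtop : ∀ t, F t ≠ ⊤ := fun t => ENNReal.ofReal_ne_top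
  -- step A : rewrite the inner value as an integral of an indicator over `Ioo 0 R`
  have stepA : ∫⁻ ρ in Ioo (0:ℝ) R, ENNReal.ofReal ρ⁻¹ * If n φ ρ
      = ∫⁻ ρ in Ioo (0:ℝ) R, ∫⁻ t in Ioo (0:ℝ) R,
          (Ioo (0:ℝ) ρ).indicator (fun u => ENNReal.ofReal ρ⁻¹ * F u) t := by
    refine setLIntegral_congr_fun measurableSet_Ioo ?_
    intro ρ hρ
    beta_reduce
    rw [lintegral_indicator measurableSet_Ioo, Measure.restrict_restrict measurableSet_Ioo,
      inter_eq_left.2 (Ioo_subset_Ioo_right hρ.2.le),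
      lintegral_const_mul' _ _ ENNReal.ofReal_ne_top]
    rfl
  -- step B : swap the two integrals
  have stepB : ∫⁻ ρ in Ioo (0:ℝ) R, ∫⁻ t in Ioo (0:ℝ) R,
          (Ioo (0:ℝ) ρ).indicator (fun u => ENNReal.ofReal ρ⁻¹ * F u) t
      = ∫⁻ t in Ioo (0:ℝ) R, ∫⁻ ρ in Ioo (0:ℝ) R,
          (Ioo (0:ℝ) ρ).indicator (fun u => ENNReal.ofReal ρ⁻¹ * F u) t := by
    apply lintegral_lintegral_swap
    have : (Function.uncurry fun ρ t =>
        (Ioo (0:ℝ) ρ).indicator (fun u => ENNReal.ofReal ρ⁻¹ * F u) t)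
        = {p : ℝ × ℝ | 0 < p.2 ∧ p.2 < p.1}.indicator
            (fun p => ENNReal.ofReal p.1⁻¹ * F p.2) := by
      funext p
      rcases p with ⟨ρ, t⟩
      by_cases ht : t ∈ Ioo (0:ℝ) ρ
      · rw [Function.uncurry_apply_pair, indicator_of_mem ht, indicator_of_mem
          (show (ρ,t) ∈ {p : ℝ × ℝ | 0 < p.2 ∧ p.2 < p.1} from ⟨ht.1, ht.2⟩)]
      · rw [Function.uncurry_apply_pair, indicator_of_notMem ht, indicator_of_notMem
          (show (ρ,t) ∉ {p : ℝ × ℝ | 0 < p.2 ∧ p.2 < p.1} from fun hc => ht ⟨hc.1, hc.2⟩)]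
    rw [this]
    refine Measurable.aemeasurable (Measurable.indicator (by fun_prop) ?_)
    exact MeasurableSet.inter (measurable_snd measurableSet_Ioi)
      (measurableSet_lt measurable_snd measurable_fst)
  -- step C : compute the inner integral
  have stepC : ∫⁻ t in Ioo (0:ℝ) R, ∫⁻ ρ in Ioo (0:ℝ) R,
          (Ioo (0:ℝ) ρ).indicator (fun u => ENNReal.ofReal ρ⁻¹ * F u) t
      = ∫⁻ t in Ioo (0:ℝ) R, ENNReal.ofReal (Real.log (R/t)) * F t := by
    refine setLIntegral_congr_fun measurableSet_Ioo ?_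
    intro t ht
    beta_reduce
    have e : ∀ ρ : ℝ, (Ioo (0:ℝ) ρ).indicator (fun u => ENNReal.ofReal ρ⁻¹ * F u) t
        = (Ioi t).indicator (fun ρ' => ENNReal.ofReal ρ'⁻¹ * F t) ρ := by
      intro ρ
      by_cases hρ : t < ρ
      · rw [indicator_of_mem (Set.mem_Ioo.2 ⟨ht.1, hρ⟩), indicator_of_mem (mem_Ioi.2 hρ)]
      · rw [indicator_of_notMem (fun hmem => hρ hmem.2),
          indicator_of_notMem (fun hmem => hρ (mem_Ioi.1 hmem))]
    rw [lintegral_congr e, lintegral_indicator measurableSet_Ioi,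
      Measure.restrict_restrict measurableSet_Ioi]
    have : Ioi t ∩ Ioo (0:ℝ) R = Ioo t R := by
      ext u
      simp only [mem_inter_iff, mem_Ioi, mem_Ioo]
      exact ⟨fun h => ⟨h.1, h.2.2⟩, fun h => ⟨h.1, ht.1.trans h.1, h.2⟩⟩
    rw [this, lintegral_mul_const' _ _ (hFtop t), lintegral_inv_Ioo t R ht.1 ht.2, mul_comm]
  -- step D : identify with L
  rw [stepA, stepB, stepC]
  refine setLIntegral_congr_fun measurableSet_Ioo ?_
  intro t ht
  beta_reduce
  rw [hF]
  rw [← ENNReal.ofReal_mul (Real.log_nonneg (by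
    rw [le_div_iff₀ ht.1]; linarith [ht.2]))]
  rw [mul_comm]


theorem pow_inv_eq {n : ℕ} (hn : 1 ≤ n) {ρ : ℝ} (hρ : 0 < ρ) :
    ENNReal.ofReal (ρ^(n-1)) * (ENNReal.ofReal (ρ^n))⁻¹ = ENNReal.ofReal ρ⁻¹ := by
  rw [← ENNReal.ofReal_inv_of_pos (pow_pos hρ n),
    ← ENNReal.ofReal_mul (pow_nonneg hρ.le _)]
  congr 1
  have hpow : ρ^n = ρ^(n-1) * ρ := by rw [← pow_succ, Nat.sub_add_cancel hn]
  rw [hpow, mul_inv, ← mul_assoc, mul_inv_cancel₀ (pow_ne_zero _ hρ.ne'), one_mul]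

theorem ball_phi {n : ℕ} (hn : 1 ≤ n) {φ : ℝ → ℝ} (hφ : Measurable φ)
    (h0 : ∀ ρ, 0 ≤ φ ρ) (R : ℝ) :
    ∫⁻ y in Metric.ball (0 : EuclideanSpace ℝ (Fin n)) R, ENNReal.ofReal (φ ‖y‖)
      = n * volume (Metric.ball (0 : EuclideanSpace ℝ (Fin n)) 1) * If n φ R := by
  rw [polar_ball hn (fun ρ => ENNReal.ofReal (φ ρ)) (by fun_prop) R]
  congr 1
  refine setLIntegral_congr_fun measurableSet_Ioo ?_
  intro ρ hρ
  beta_reduce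
  rw [← ENNReal.ofReal_mul (pow_nonneg hρ.1.le _), mul_comm (ρ^(n-1)) (φ ρ)]

theorem ball_KI {n : ℕ} (hn : 1 ≤ n) {φ : ℝ → ℝ} (hφ : Measurable φ)
    (h0 : ∀ ρ, 0 ≤ φ ρ) {R : ℝ} (hR : 0 < R) :
    ∫⁻ y in Metric.ball (0 : EuclideanSpace ℝ (Fin n)) R,
        (ENNReal.ofReal (‖y‖^n))⁻¹ * If n φ ‖y‖
      = n * volume (Metric.ball (0 : EuclideanSpace ℝ (Fin n)) 1) * Lf n φ R := by
  rw [polar_ball hn (fun ρ => (ENNReal.ofReal (ρ^n))⁻¹ * If n φ ρ)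
    (((measurable_id.pow_const n).ennreal_ofReal.inv).mul (If_meas n φ)) R]
  congr 1
  rw [← tonelli hφ h0 hR]
  refine setLIntegral_congr_fun measurableSet_Ioo ?_
  intro ρ hρ
  beta_reduce
  rw [← mul_assoc, pow_inv_eq hn hρ.1]

theorem phi_le {n : ℕ} (hn : 1 ≤ n) {φ : ℝ → ℝ} (h0 : ∀ ρ, 0 ≤ φ ρ)
    (hanti : AntitoneOn φ (Ioi (0:ℝ))) {s : ℝ} (hs : 0 < s) :
    ENNReal.ofReal (φ (s/2)) ≤
      ENNReal.ofReal ((n:ℝ) * 2^n) * ((ENNReal.ofReal (s^n))⁻¹ * If n φ s) := by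
  have hn0 : (0:ℝ) < n := by exact_mod_cast hn
  have h1 : ENNReal.ofReal (φ (s/2)) * ENNReal.ofReal ((s/2)^n / n) ≤ If n φ s := by
    calc ENNReal.ofReal (φ (s/2)) * ENNReal.ofReal ((s/2)^n / n)
        = ∫⁻ t in Ioo (0:ℝ) (s/2), ENNReal.ofReal (φ (s/2)) * ENNReal.ofReal (t^(n-1)) := by
          rw [lintegral_const_mul' _ _ ENNReal.ofReal_ne_top,
            lintegral_pow_Ioo n hn _ (half_pos hs)]
      _ ≤ ∫⁻ t in Ioo (0:ℝ) (s/2), ENNReal.ofReal (φ t * t^(n-1)) := by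
          refine lintegral_mono_ae ?_
          filter_upwards [ae_restrict_mem measurableSet_Ioo] with t htm
          rw [← ENNReal.ofReal_mul (h0 _)]
          refine ENNReal.ofReal_le_ofReal ?_
          exact mul_le_mul_of_nonneg_right
            (hanti (mem_Ioi.2 htm.1) (mem_Ioi.2 (half_pos hs)) htm.2.le)
            (pow_nonneg htm.1.le _)
      _ ≤ If n φ s := lintegral_mono'
          (Measure.restrict_mono (Ioo_subset_Ioo_right (half_le_self hs.le)) le_rfl) le_rfl
  have hconst : ENNReal.ofReal ((n:ℝ) * 2^n) * (ENNReal.ofReal (s^n))⁻¹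
      * ENNReal.ofReal ((s/2)^n / n) = 1 := by
    rw [← ENNReal.ofReal_inv_of_pos (pow_pos hs n),
      ← ENNReal.ofReal_mul (by positivity), ← ENNReal.ofReal_mul (by positivity)]
    rw [show (n:ℝ) * 2^n * (s^n)⁻¹ * ((s/2)^n / n) = 1 from by
      rw [div_pow]
      field_simp]
    exact ENNReal.ofReal_one
  calc ENNReal.ofReal (φ (s/2))
      = (ENNReal.ofReal ((n:ℝ) * 2^n) * (ENNReal.ofReal (s^n))⁻¹
          * ENNReal.ofReal ((s/2)^n / n)) * ENNReal.ofReal (φ (s/2)) := by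
        rw [hconst, one_mul]
    _ = ENNReal.ofReal ((n:ℝ) * 2^n) * ((ENNReal.ofReal (s^n))⁻¹
          * (ENNReal.ofReal (φ (s/2)) * ENNReal.ofReal ((s/2)^n / n))) := by
        ring
    _ ≤ ENNReal.ofReal ((n:ℝ) * 2^n) * ((ENNReal.ofReal (s^n))⁻¹ * If n φ s) := by
        gcongr


theorem key1 {n : ℕ} (hn : 1 ≤ n) {φ : ℝ → ℝ} (h0 : ∀ ρ, 0 ≤ φ ρ)
    (lam : ℝ) {t : ℝ} (ht : 0 < t) :
    ENNReal.ofReal (t ^ (lam - (n:ℝ))) * If n φ t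
      ≤ ENNReal.ofReal ((Real.log 2)⁻¹ * 2^((n:ℝ)-lam)) * Sf n lam φ := by
  have hlog2 : (0:ℝ) < Real.log 2 := Real.log_pos one_lt_two
  have hlog : ENNReal.ofReal (Real.log 2) * If n φ t ≤ Lf n φ (2*t) := by
    calc ENNReal.ofReal (Real.log 2) * If n φ t
        = ∫⁻ ρ in Ioo (0:ℝ) t, ENNReal.ofReal (Real.log 2)
            * ENNReal.ofReal (φ ρ * ρ^(n-1)) :=
          (lintegral_const_mul' _ _ ENNReal.ofReal_ne_top).symm
      _ ≤ ∫⁻ ρ in Ioo (0:ℝ) t, ENNReal.ofReal (φ ρ * ρ^(n-1) * Real.log (2*t/ρ)) := by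
          refine lintegral_mono_ae ?_
          filter_upwards [ae_restrict_mem measurableSet_Ioo] with ρ hρ
          rw [← ENNReal.ofReal_mul hlog2.le]
          refine ENNReal.ofReal_le_ofReal ?_
          rw [mul_comm]
          refine mul_le_mul_of_nonneg_left ?_
            (mul_nonneg (h0 _) (pow_nonneg hρ.1.le _))
          refine Real.log_le_log two_pos ?_
          rw [le_div_iff₀ hρ.1]
          linarith [hρ.2]
      _ ≤ Lf n φ (2*t) := lintegral_mono'
          (Measure.restrict_mono (Ioo_subset_Ioo_right (by linarith)) le_rfl) le_rfl
  have hid : ENNReal.ofReal (t ^ (lam - (n:ℝ)))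
      = ENNReal.ofReal ((Real.log 2)⁻¹ * 2^((n:ℝ)-lam))
        * (ENNReal.ofReal ((2*t) ^ (lam - (n:ℝ))) * ENNReal.ofReal (Real.log 2)) := by
    rw [← ENNReal.ofReal_mul (Real.rpow_nonneg (by positivity) _),
      ← ENNReal.ofReal_mul (by positivity)]
    congr 1
    have h2t : (2*t) ^ (lam - (n:ℝ)) = 2^(lam-(n:ℝ)) * t^(lam-(n:ℝ)) :=
      Real.mul_rpow (by norm_num) ht.le
    have h22 : (2:ℝ)^((n:ℝ)-lam) * 2^(lam-(n:ℝ)) = 1 := by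
      rw [← Real.rpow_add two_pos]
      norm_num
    rw [h2t, show (Real.log 2)⁻¹ * 2^((n:ℝ)-lam) * (2^(lam-(n:ℝ)) * t^(lam-(n:ℝ))
        * Real.log 2) = ((Real.log 2)⁻¹ * Real.log 2) * ((2:ℝ)^((n:ℝ)-lam)
        * 2^(lam-(n:ℝ))) * t^(lam-(n:ℝ)) from by ring,
      inv_mul_cancel₀ hlog2.ne', h22, one_mul, one_mul]
  calc ENNReal.ofReal (t ^ (lam - (n:ℝ))) * If n φ t
      = ENNReal.ofReal ((Real.log 2)⁻¹ * 2^((n:ℝ)-lam))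
        * (ENNReal.ofReal ((2*t) ^ (lam - (n:ℝ)))
            * (ENNReal.ofReal (Real.log 2) * If n φ t)) := by
        rw [hid]; ring
    _ ≤ ENNReal.ofReal ((Real.log 2)⁻¹ * 2^((n:ℝ)-lam))
        * (ENNReal.ofReal ((2*t) ^ (lam - (n:ℝ))) * Lf n φ (2*t)) := by gcongr
    _ ≤ ENNReal.ofReal ((Real.log 2)⁻¹ * 2^((n:ℝ)-lam)) * Sf n lam φ := by
        gcongr
        exact le_iSup_of_le (2*t) (le_iSup_of_le (by linarith) le_rfl)

theorem G_bound {n : ℕ} (hn : 1 ≤ n) {φ : ℝ → ℝ} (h0 : ∀ ρ, 0 ≤ φ ρ)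
    (hanti : AntitoneOn φ (Ioi (0:ℝ))) {ρ : ℝ} (hρ : 0 < ρ) :
    Gf n φ ρ ≤ (ENNReal.ofReal (ρ^n))⁻¹ * If n φ ρ
      + ENNReal.ofReal (φ ρ) * ENNReal.ofReal ((n:ℝ)⁻¹) := by
  refine iSup_le fun t => iSup_le fun htc => ?_
  obtain ⟨hρt, ht⟩ := htc
  have hsplit : If n φ t ≤ If n φ ρ + ∫⁻ u in Ico ρ t, ENNReal.ofReal (φ u * u^(n-1)) := by
    have hsub : Ioo (0:ℝ) t ⊆ Ioo 0 ρ ∪ Ico ρ t := by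
      intro u hu
      rcases lt_or_ge u ρ with h | h
      · exact Or.inl ⟨hu.1, h⟩
      · exact Or.inr ⟨h, hu.2⟩
    calc If n φ t ≤ ∫⁻ u in Ioo (0:ℝ) ρ ∪ Ico ρ t, ENNReal.ofReal (φ u * u^(n-1)) :=
          lintegral_mono' (Measure.restrict_mono hsub le_rfl) le_rfl
      _ ≤ ∫⁻ u, ENNReal.ofReal (φ u * u^(n-1))
            ∂(volume.restrict (Ioo (0:ℝ) ρ) + volume.restrict (Ico ρ t)) :=
          lintegral_mono' (Measure.restrict_union_le _ _) le_rfl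
      _ = _ := lintegral_add_measure _ _ _
  have htail : ∫⁻ u in Ico ρ t, ENNReal.ofReal (φ u * u^(n-1))
      ≤ ENNReal.ofReal (φ ρ) * ENNReal.ofReal (t^n / n) := by
    calc ∫⁻ u in Ico ρ t, ENNReal.ofReal (φ u * u^(n-1))
        ≤ ∫⁻ u in Ico ρ t, ENNReal.ofReal (φ ρ) * ENNReal.ofReal (u^(n-1)) := by
          refine lintegral_mono_ae ?_
          filter_upwards [ae_restrict_mem measurableSet_Ico] with u hu
          rw [← ENNReal.ofReal_mul (h0 _)]
          refine ENNReal.ofReal_le_ofReal ?_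
          exact mul_le_mul_of_nonneg_right
            (hanti (mem_Ioi.2 hρ) (mem_Ioi.2 (hρ.trans_le hu.1)) hu.1)
            (pow_nonneg (hρ.trans_le hu.1).le _)
      _ = ENNReal.ofReal (φ ρ) * ∫⁻ u in Ico ρ t, ENNReal.ofReal (u^(n-1)) :=
          lintegral_const_mul' _ _ ENNReal.ofReal_ne_top
      _ ≤ ENNReal.ofReal (φ ρ) * ENNReal.ofReal (t^n / n) := by
          gcongr
          rw [← lintegral_pow_Ioo n hn t (hρ.trans_le hρt)]
          refine lintegral_mono' (Measure.restrict_mono ?_ le_rfl) le_rfl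
          intro u hu
          exact ⟨hρ.trans_le hu.1, hu.2⟩
  have hmid : (ENNReal.ofReal (t^n))⁻¹ * (ENNReal.ofReal (φ ρ) * ENNReal.ofReal (t^n / n))
      = ENNReal.ofReal (φ ρ) * ENNReal.ofReal ((n:ℝ)⁻¹) := by
    have htpos : (0:ℝ) < t^n := pow_pos (hρ.trans_le hρt) n
    rw [← ENNReal.ofReal_inv_of_pos htpos, ← ENNReal.ofReal_mul (h0 _),
      ← ENNReal.ofReal_mul (by positivity), ← ENNReal.ofReal_mul (h0 _)]
    congr 1
    field_simp
  calc (ENNReal.ofReal (t^n))⁻¹ * If n φ t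
      ≤ (ENNReal.ofReal (t^n))⁻¹ * (If n φ ρ
          + ENNReal.ofReal (φ ρ) * ENNReal.ofReal (t^n / n)) := by
        refine mul_le_mul_right (hsplit.trans ?_) _
        exact add_le_add_right htail _
    _ = (ENNReal.ofReal (t^n))⁻¹ * If n φ ρ
          + (ENNReal.ofReal (t^n))⁻¹ * (ENNReal.ofReal (φ ρ) * ENNReal.ofReal (t^n / n)) :=
        mul_add _ _ _
    _ ≤ (ENNReal.ofReal (ρ^n))⁻¹ * If n φ ρ
          + ENNReal.ofReal (φ ρ) * ENNReal.ofReal ((n:ℝ)⁻¹) := by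
        rw [hmid]
        refine add_le_add_left (mul_le_mul_left ?_ _) _
        exact ENNReal.inv_le_inv' (ENNReal.ofReal_le_ofReal
          (pow_le_pow_left₀ hρ.le hρt n))

theorem int_G {n : ℕ} (hn : 1 ≤ n) {φ : ℝ → ℝ} (hφ : Measurable φ) (h0 : ∀ ρ, 0 ≤ φ ρ)
    (hanti : AntitoneOn φ (Ioi (0:ℝ))) {r : ℝ} (hr : 0 < r) :
    ∫⁻ ρ in Ioo (0:ℝ) r, ENNReal.ofReal (ρ^(n-1)) * Gf n φ ρ
      ≤ Lf n φ r + ENNReal.ofReal ((n:ℝ)⁻¹) * If n φ r := by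
  calc ∫⁻ ρ in Ioo (0:ℝ) r, ENNReal.ofReal (ρ^(n-1)) * Gf n φ ρ
      ≤ ∫⁻ ρ in Ioo (0:ℝ) r, (ENNReal.ofReal (ρ^(n-1)) * ((ENNReal.ofReal (ρ^n))⁻¹ * If n φ ρ)
          + ENNReal.ofReal (ρ^(n-1)) * (ENNReal.ofReal (φ ρ) * ENNReal.ofReal ((n:ℝ)⁻¹))) := by
        refine lintegral_mono_ae ?_
        filter_upwards [ae_restrict_mem measurableSet_Ioo] with ρ hρ
        rw [← mul_add]
        exact mul_le_mul_right (G_bound hn h0 hanti hρ.1) _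
    _ = (∫⁻ ρ in Ioo (0:ℝ) r, ENNReal.ofReal (ρ^(n-1)) * ((ENNReal.ofReal (ρ^n))⁻¹ * If n φ ρ))
          + ∫⁻ ρ in Ioo (0:ℝ) r,
              ENNReal.ofReal (ρ^(n-1)) * (ENNReal.ofReal (φ ρ) * ENNReal.ofReal ((n:ℝ)⁻¹)) :=
        lintegral_add_left (by
          exact ((measurable_id.pow_const _).ennreal_ofReal.mul
            (((measurable_id.pow_const n).ennreal_ofReal.inv).mul (If_meas n φ)))) _
    _ ≤ Lf n φ r + ENNReal.ofReal ((n:ℝ)⁻¹) * If n φ r := by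
        refine add_le_add ?_ ?_
        · rw [← tonelli hφ h0 hr]
          refine le_of_eq (setLIntegral_congr_fun measurableSet_Ioo
            (fun ρ hρ => ?_))
          rw [← mul_assoc, pow_inv_eq hn hρ.1]
        · simp only [If]
          rw [← lintegral_const_mul' _ _ ENNReal.ofReal_ne_top]
          refine le_of_eq (setLIntegral_congr_fun measurableSet_Ioo
            (fun ρ hρ => ?_))
          rw [← ENNReal.ofReal_mul (h0 _), ← ENNReal.ofReal_mul (pow_nonneg hρ.1.le _),
            ← ENNReal.ofReal_mul (by positivity : (0:ℝ) ≤ ((n:ℝ))⁻¹)]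
          congr 1
          ring


theorem lintegral_nnnorm_f {n : ℕ} (hn : 1 ≤ n) {φ : ℝ → ℝ} (h0 : ∀ ρ, 0 ≤ φ ρ)
    {f : EuclideanSpace ℝ (Fin n) → ℝ} (hf : ∀ y, y ≠ 0 → f y = φ ‖y‖)
    (s : Set (EuclideanSpace ℝ (Fin n))) :
    ∫⁻ y in s, (‖f y‖₊ : ℝ≥0∞) = ∫⁻ y in s, ENNReal.ofReal (φ ‖y‖) := by
  haveI : Nonempty (Fin n) := ⟨⟨0, hn⟩⟩
  refine lintegral_congr_ae ?_
  have hae : ∀ᵐ y : EuclideanSpace ℝ (Fin n) ∂(volume.restrict s), y ≠ 0 := by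
    refine ae_restrict_of_ae ?_
    refine ae_iff.2 ?_
    simp only [ne_eq, not_not, setOf_eq_eq_singleton]
    exact measure_singleton _
  filter_upwards [hae] with y hy
  rw [hf y hy, ← enorm_eq_nnnorm, Real.enorm_eq_ofReal (h0 _)]

theorem dist_lt_two_mul {E : Type*} [NormedAddCommGroup E] {z w y : E} {r : ℝ}
    (hw : w ∈ ball z r) (hy : y ∈ ball z r) : dist w y < 2 * r := by
  have h1 := mem_ball.1 hw
  have h2 := mem_ball.1 hy
  calc dist w y ≤ dist w z + dist y z := dist_triangle_right w y z
    _ < 2 * r := by linarith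

theorem Mf_le {n : ℕ} (hn : 1 ≤ n) {φ : ℝ → ℝ} (hφ : Measurable φ)
    (h0 : ∀ ρ, 0 ≤ φ ρ) (hanti : AntitoneOn φ (Ioi (0:ℝ)))
    {f : EuclideanSpace ℝ (Fin n) → ℝ} (hf : ∀ y, y ≠ 0 → f y = φ ‖y‖)
    (y : EuclideanSpace ℝ (Fin n)) :
    maximalFn n f y ≤ ENNReal.ofReal ((n:ℝ) * 6^n) * Gf n φ ‖y‖ := by
  haveI : Nonempty (Fin n) := ⟨⟨0, hn⟩⟩
  set ω := volume (ball (0 : EuclideanSpace ℝ (Fin n)) 1) with hω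
  have hω0 : ω ≠ 0 := (measure_ball_pos _ _ one_pos).ne'
  have hωtop : ω ≠ ⊤ := measure_ball_lt_top.ne
  rw [maximalFn]
  refine iSup_le fun z => iSup_le fun r => iSup_le fun hr => iSup_le fun hy => ?_
  rw [lintegral_nnnorm_f hn h0 hf]
  have hvol0 : volume (ball z r) ≠ 0 := (measure_ball_pos _ _ hr).ne'
  have hvoltop : volume (ball z r) ≠ ⊤ := measure_ball_lt_top.ne
  rcases le_or_gt (4*r) ‖y‖ with hcase | hcase
  · -- small ball far from the origin
    have hs : 0 < ‖y‖ := lt_of_lt_of_le (by linarith) hcase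
    have hbound : ∀ w ∈ ball z r, φ ‖w‖ ≤ φ (‖y‖/2) := by
      intro w hw
      have h1 : dist w y < 2*r := dist_lt_two_mul hw hy
      have h2 : ‖y‖ - ‖w‖ ≤ dist w y := by
        rw [dist_comm, dist_eq_norm]
        exact norm_sub_norm_le y w
      refine hanti (mem_Ioi.2 (half_pos hs)) (mem_Ioi.2 (by linarith)) (by linarith)
    have havg : (volume (ball z r))⁻¹ * ∫⁻ w in ball z r, ENNReal.ofReal (φ ‖w‖)
        ≤ ENNReal.ofReal (φ (‖y‖/2)) := by
      have hint : ∫⁻ w in ball z r, ENNReal.ofReal (φ ‖w‖)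
          ≤ ENNReal.ofReal (φ (‖y‖/2)) * volume (ball z r) := by
        rw [← setLIntegral_const]
        refine lintegral_mono_ae ?_
        filter_upwards [ae_restrict_mem measurableSet_ball] with w hw
        exact ENNReal.ofReal_le_ofReal (hbound w hw)
      calc (volume (ball z r))⁻¹ * ∫⁻ w in ball z r, ENNReal.ofReal (φ ‖w‖)
          ≤ (volume (ball z r))⁻¹ * (ENNReal.ofReal (φ (‖y‖/2)) * volume (ball z r)) :=
            mul_le_mul_right hint _
        _ = ENNReal.ofReal (φ (‖y‖/2)) * ((volume (ball z r))⁻¹ * volume (ball z r)) := by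
            ring
        _ = ENNReal.ofReal (φ (‖y‖/2)) := by
            rw [ENNReal.inv_mul_cancel hvol0 hvoltop, mul_one]
    refine havg.trans ((phi_le hn h0 hanti hs).trans ?_)
    have hG : (ENNReal.ofReal (‖y‖^n))⁻¹ * If n φ ‖y‖ ≤ Gf n φ ‖y‖ :=
      le_iSup_of_le ‖y‖ (le_iSup_of_le ⟨le_rfl, hs⟩ le_rfl)
    refine (mul_le_mul_right hG _).trans ?_
    refine mul_le_mul_left (ENNReal.ofReal_le_ofReal ?_) _
    have : (2:ℝ)^n ≤ 6^n := pow_le_pow_left₀ (by norm_num) (by norm_num) n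
    have hn1 : (1:ℝ) ≤ (n:ℝ) := by exact_mod_cast hn
    nlinarith
  · -- large ball
    have hsub : ball z r ⊆ ball (0 : EuclideanSpace ℝ (Fin n)) (6*r) := by
      intro w hw
      rw [mem_ball, dist_zero_right]
      have h1 : dist w y < 2*r := dist_lt_two_mul hw hy
      have h2 : ‖w‖ - ‖y‖ ≤ dist w y := by
        rw [dist_eq_norm]
        exact norm_sub_norm_le w y
      linarith
    have hint : ∫⁻ w in ball z r, ENNReal.ofReal (φ ‖w‖)
        ≤ n * ω * If n φ (6*r) := by
      rw [← ball_phi hn hφ h0 (6*r)]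
      exact lintegral_mono' (Measure.restrict_mono hsub le_rfl) le_rfl
    have hvol : volume (ball z r) = ENNReal.ofReal (r^n) * ω := by
      have h := Measure.addHaar_ball (volume : Measure (EuclideanSpace ℝ (Fin n))) z hr.le
      rwa [finrank_euclideanSpace_fin] at h
    have hr6 : (0:ℝ) < 6*r := by linarith
    have hinv : (ENNReal.ofReal (r^n))⁻¹
        = ENNReal.ofReal ((6:ℝ)^n) * (ENNReal.ofReal ((6*r)^n))⁻¹ := by
      rw [← ENNReal.ofReal_inv_of_pos (pow_pos hr6 n),
        ← ENNReal.ofReal_mul (by positivity),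
        ← ENNReal.ofReal_inv_of_pos (pow_pos hr n)]
      congr 1
      rw [mul_pow]
      rw [mul_inv, ← mul_assoc, mul_inv_cancel₀ (by positivity), one_mul]
    calc (volume (ball z r))⁻¹ * ∫⁻ w in ball z r, ENNReal.ofReal (φ ‖w‖)
        ≤ (ENNReal.ofReal (r^n) * ω)⁻¹ * (n * ω * If n φ (6*r)) := by
          rw [← hvol]
          exact mul_le_mul_right hint _
      _ = (n : ℝ≥0∞) * ((ENNReal.ofReal (r^n))⁻¹ * If n φ (6*r)) * (ω⁻¹ * ω) := by
          rw [ENNReal.mul_inv (Or.inr hωtop) (Or.inr hω0)]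
          ring
      _ = (n : ℝ≥0∞) * ((ENNReal.ofReal (r^n))⁻¹ * If n φ (6*r)) := by
          rw [ENNReal.inv_mul_cancel hω0 hωtop, mul_one]
      _ = ENNReal.ofReal ((n:ℝ) * 6^n) * ((ENNReal.ofReal ((6*r)^n))⁻¹ * If n φ (6*r)) := by
          rw [hinv, ENNReal.ofReal_mul (by positivity), ← ENNReal.ofReal_natCast n]
          ring
      _ ≤ ENNReal.ofReal ((n:ℝ) * 6^n) * Gf n φ ‖y‖ := by
          refine mul_le_mul_right ?_ _
          exact le_iSup_of_le (6*r) (le_iSup_of_le ⟨by linarith, hr6⟩ le_rfl)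

theorem Mf_ge {n : ℕ} (hn : 1 ≤ n) {φ : ℝ → ℝ} (hφ : Measurable φ)
    (h0 : ∀ ρ, 0 ≤ φ ρ)
    {f : EuclideanSpace ℝ (Fin n) → ℝ} (hf : ∀ y, y ≠ 0 → f y = φ ‖y‖)
    {y : EuclideanSpace ℝ (Fin n)} (hy : y ≠ 0) :
    ENNReal.ofReal ((n:ℝ) * ((2:ℝ)^n)⁻¹) * ((ENNReal.ofReal (‖y‖^n))⁻¹ * If n φ ‖y‖)
      ≤ maximalFn n f y := by
  haveI : Nonempty (Fin n) := ⟨⟨0, hn⟩⟩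
  set ω := volume (ball (0 : EuclideanSpace ℝ (Fin n)) 1) with hω
  have hω0 : ω ≠ 0 := (measure_ball_pos _ _ one_pos).ne'
  have hωtop : ω ≠ ⊤ := measure_ball_lt_top.ne
  have hs : 0 < ‖y‖ := norm_pos_iff.2 hy
  have hr2 : (0:ℝ) < 2*‖y‖ := by linarith
  have hmem : y ∈ ball (0 : EuclideanSpace ℝ (Fin n)) (2*‖y‖) := by
    rw [mem_ball, dist_zero_right]; linarith
  rw [maximalFn]
  refine le_trans ?_ (le_iSup_of_le 0 (le_iSup_of_le (2*‖y‖)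
    (le_iSup_of_le hr2 (le_iSup_of_le hmem le_rfl))))
  rw [lintegral_nnnorm_f hn h0 hf, ball_phi hn hφ h0 (2*‖y‖)]
  have hvol : volume (ball (0 : EuclideanSpace ℝ (Fin n)) (2*‖y‖))
      = ENNReal.ofReal ((2*‖y‖)^n) * ω := by
    have h := Measure.addHaar_ball (volume : Measure (EuclideanSpace ℝ (Fin n))) 0 hr2.le
    rwa [finrank_euclideanSpace_fin] at h
  rw [hvol]
  have hinv : (ENNReal.ofReal ((2*‖y‖)^n))⁻¹
      = ENNReal.ofReal (((2:ℝ)^n)⁻¹) * (ENNReal.ofReal (‖y‖^n))⁻¹ := by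
    rw [← ENNReal.ofReal_inv_of_pos (pow_pos hr2 n),
      ← ENNReal.ofReal_inv_of_pos (pow_pos hs n),
      ← ENNReal.ofReal_mul (by positivity)]
    congr 1
    rw [mul_pow, mul_inv]
  calc ENNReal.ofReal ((n:ℝ) * ((2:ℝ)^n)⁻¹) * ((ENNReal.ofReal (‖y‖^n))⁻¹ * If n φ ‖y‖)
      ≤ ENNReal.ofReal ((n:ℝ) * ((2:ℝ)^n)⁻¹) * ((ENNReal.ofReal (‖y‖^n))⁻¹
          * If n φ (2*‖y‖)) := by
        refine mul_le_mul_right (mul_le_mul_right (If_mono n φ (by linarith)) _) _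
    _ = (ENNReal.ofReal ((2*‖y‖)^n) * ω)⁻¹ * (n * ω * If n φ (2*‖y‖)) := by
        rw [ENNReal.mul_inv (Or.inr hωtop) (Or.inr hω0), hinv,
          ENNReal.ofReal_mul (by positivity : (0:ℝ) ≤ (n:ℝ)), ENNReal.ofReal_natCast n]
        calc (n:ℝ≥0∞) * ENNReal.ofReal (((2:ℝ)^n)⁻¹)
              * ((ENNReal.ofReal (‖y‖^n))⁻¹ * If n φ (2*‖y‖))
            = (n:ℝ≥0∞) * ENNReal.ofReal (((2:ℝ)^n)⁻¹) * (ENNReal.ofReal (‖y‖^n))⁻¹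
              * If n φ (2*‖y‖) * (ω⁻¹ * ω) := by
              rw [ENNReal.inv_mul_cancel hω0 hωtop, mul_one]; ring
          _ = _ := by ring
    _ ≤ _ := le_rfl
end Stmt4

/-- For `n ≥ 1`, `0 < λ < n`, there exist `0 < c ≤ C` (depending only on `n, λ`)
such that for every radial decreasing `f(x) = φ(|x|)` (`φ ≥ 0` nonincreasing on `(0,∞)`),
`c · sup_{x>0} x^{λ-n} ∫_0^x φ(ρ) ρ^{n-1} ln(x/ρ) dρ ≤ ‖Mf‖_{M_{1,λ}}
  ≤ C · sup_{x>0} x^{λ-n} ∫_0^x φ(ρ) ρ^{n-1} ln(x/ρ) dρ`. -/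
theorem statement4 (n : ℕ) (hn : 1 ≤ n) (lam : ℝ) (hlam0 : 0 < lam) (hlamn : lam < n) :
    ∃ c C : ℝ, 0 < c ∧ c ≤ C ∧ ∀ (f : EuclideanSpace ℝ (Fin n) → ℝ) (φ : ℝ → ℝ),
      (∀ ρ ∈ Set.Ioi (0:ℝ), 0 ≤ φ ρ) → AntitoneOn φ (Set.Ioi (0:ℝ)) →
      (∀ x, f x = φ ‖x‖) →
      ENNReal.ofReal c *
          (⨆ (x : ℝ) (_ : 0 < x), ENNReal.ofReal (x ^ (lam - (n:ℝ))) *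
            ∫⁻ ρ in Set.Ioo (0:ℝ) x,
              ENNReal.ofReal (φ ρ * ρ ^ (n - 1) * Real.log (x / ρ)))
        ≤ morreyNormE n lam (maximalFn n f) ∧
      morreyNormE n lam (maximalFn n f)
        ≤ ENNReal.ofReal C *
          ⨆ (x : ℝ) (_ : 0 < x), ENNReal.ofReal (x ^ (lam - (n:ℝ))) *
            ∫⁻ ρ in Set.Ioo (0:ℝ) x,
              ENNReal.ofReal (φ ρ * ρ ^ (n - 1) * Real.log (x / ρ)) := by
  haveI : Nonempty (Fin n) := ⟨⟨0, hn⟩⟩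
  set ω := volume (ball (0 : EuclideanSpace ℝ (Fin n)) 1) with hω
  have hω0 : ω ≠ 0 := (measure_ball_pos _ _ one_pos).ne'
  have hωtop : ω ≠ ⊤ := measure_ball_lt_top.ne
  have hn0 : (0:ℝ) < n := by exact_mod_cast hn
  set C₁ : ℝ≥0∞ := ENNReal.ofReal ((Real.log 2)⁻¹ * 2^((n:ℝ)-lam)) with hC₁
  set D₀ : ℝ≥0∞ := ENNReal.ofReal ((n:ℝ) * ((2:ℝ)^n)⁻¹) * n * ω with hD₀
  set D : ℝ≥0∞ := ENNReal.ofReal ((n:ℝ) * 6^n) * ω *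
    (C₁ + n * ENNReal.ofReal (3^((n:ℝ)-lam)) * (1 + ENNReal.ofReal ((n:ℝ)⁻¹) * C₁)) with hD
  have hC₁top : C₁ ≠ ⊤ := ENNReal.ofReal_ne_top
  have hD₀0 : D₀ ≠ 0 := by
    refine mul_ne_zero (mul_ne_zero ?_ ?_) hω0
    · exact (ENNReal.ofReal_pos.2 (by positivity)).ne'
    · exact_mod_cast Nat.cast_ne_zero.2 (by omega)
  have hD₀top : D₀ ≠ ⊤ := by
    refine ENNReal.mul_ne_top (ENNReal.mul_ne_top ENNReal.ofReal_ne_top ?_) hωtop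
    exact ENNReal.natCast_ne_top n
  have hDtop : D ≠ ⊤ := by
    refine ENNReal.mul_ne_top (ENNReal.mul_ne_top ENNReal.ofReal_ne_top hωtop) ?_
    refine ENNReal.add_ne_top.2 ⟨hC₁top, ?_⟩
    refine ENNReal.mul_ne_top (ENNReal.mul_ne_top (ENNReal.natCast_ne_top n)
      ENNReal.ofReal_ne_top) ?_
    exact ENNReal.add_ne_top.2 ⟨ENNReal.one_ne_top,
      ENNReal.mul_ne_top ENNReal.ofReal_ne_top hC₁top⟩
  refine ⟨D₀.toReal, D₀.toReal + D.toReal, ENNReal.toReal_pos hD₀0 hD₀top,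
    le_add_of_nonneg_right ENNReal.toReal_nonneg, ?_⟩
  intro f φ hφ0 hφanti hf
  -- measurable surrogate for φ
  set φ' : ℝ → ℝ := fun ρ => φ (Real.exp (Real.log ρ)) with hφ'
  have hantiexp : Antitone (fun t => φ (Real.exp t)) := fun a b hab =>
    hφanti (Real.exp_pos a) (Real.exp_pos b) (Real.exp_le_exp.2 hab)
  have hφ'm : Measurable φ' := hantiexp.measurable.comp Real.measurable_log
  have h0' : ∀ ρ, 0 ≤ φ' ρ := fun ρ => hφ0 _ (Real.exp_pos _)
  have heq : ∀ ρ : ℝ, 0 < ρ → φ' ρ = φ ρ := fun ρ hρ => by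
    rw [hφ']; simp only [Real.exp_log hρ]
  have hanti' : AntitoneOn φ' (Ioi (0:ℝ)) := fun a ha b hb hab => by
    rw [heq a ha, heq b hb]; exact hφanti ha hb hab
  have hf' : ∀ y : EuclideanSpace ℝ (Fin n), y ≠ 0 → f y = φ' ‖y‖ := fun y hy => by
    rw [hf y, heq _ (norm_pos_iff.2 hy)]
  have hSeq : (⨆ (x : ℝ) (_ : 0 < x), ENNReal.ofReal (x ^ (lam - (n:ℝ))) *
      ∫⁻ ρ in Set.Ioo (0:ℝ) x,
        ENNReal.ofReal (φ ρ * ρ ^ (n - 1) * Real.log (x / ρ))) = Stmt4.Sf n lam φ' := by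
    simp only [Stmt4.Sf, Stmt4.Lf]
    refine iSup_congr fun x => iSup_congr fun hx => ?_
    congr 1
    refine setLIntegral_congr_fun measurableSet_Ioo ?_
    intro ρ hρ
    beta_reduce
    rw [heq ρ hρ.1]
  rw [hSeq]
  constructor
  · -- lower bound
    rw [ENNReal.ofReal_toReal hD₀top, Stmt4.Sf]
    simp only [ENNReal.mul_iSup]
    refine iSup_le fun x => iSup_le fun hx => ?_
    have hae : ∀ᵐ y : EuclideanSpace ℝ (Fin n)
        ∂(volume.restrict (ball (0 : EuclideanSpace ℝ (Fin n)) x)), y ≠ 0 := by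
      refine ae_restrict_of_ae (ae_iff.2 ?_)
      simp only [ne_eq, not_not, setOf_eq_eq_singleton]
      exact measure_singleton _
    have step : ENNReal.ofReal ((n:ℝ) * ((2:ℝ)^n)⁻¹) * ((n : ℝ≥0∞) * ω * Stmt4.Lf n φ' x)
        ≤ ∫⁻ y in ball (0 : EuclideanSpace ℝ (Fin n)) x, maximalFn n f y := by
      rw [← Stmt4.ball_KI hn hφ'm h0' hx, ← lintegral_const_mul' _ _ ENNReal.ofReal_ne_top]
      refine lintegral_mono_ae ?_
      filter_upwards [hae] with y hy
      exact Stmt4.Mf_ge hn hφ'm h0' hf' hy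
    calc D₀ * (ENNReal.ofReal (x ^ (lam - (n:ℝ))) * Stmt4.Lf n φ' x)
        = ENNReal.ofReal (x ^ (lam - (n:ℝ))) *
            (ENNReal.ofReal ((n:ℝ) * ((2:ℝ)^n)⁻¹) * ((n : ℝ≥0∞) * ω * Stmt4.Lf n φ' x)) := by
          rw [hD₀]; ring
      _ ≤ ENNReal.ofReal (x ^ (lam - (n:ℝ))) *
            ∫⁻ y in ball (0 : EuclideanSpace ℝ (Fin n)) x, maximalFn n f y :=
          mul_le_mul_right step _
      _ ≤ morreyNormE n lam (maximalFn n f) := by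
          rw [morreyNormE]
          exact le_iSup_of_le 0 (le_iSup_of_le x (le_iSup_of_le hx le_rfl))
  · -- upper bound
    have hCle : D ≤ ENNReal.ofReal (D₀.toReal + D.toReal) := by
      conv_lhs => rw [← ENNReal.ofReal_toReal hDtop]
      exact ENNReal.ofReal_le_ofReal (le_add_of_nonneg_left ENNReal.toReal_nonneg)
    refine le_trans ?_ (mul_le_mul_left hCle _)
    rw [morreyNormE]
    refine iSup_le fun x => iSup_le fun r => iSup_le fun hr => ?_
    have hMf : ∫⁻ y in ball x r, maximalFn n f y
        ≤ ENNReal.ofReal ((n:ℝ) * 6^n) * ∫⁻ y in ball x r, Stmt4.Gf n φ' ‖y‖ := by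
      rw [← lintegral_const_mul' _ _ ENNReal.ofReal_ne_top]
      exact lintegral_mono fun y => Stmt4.Mf_le hn hφ'm h0' hanti' hf' y
    rcases le_or_gt (2*r) ‖x‖ with hcase | hcase
    · -- ball far from the origin
      have hGy : ∀ y ∈ ball x r, Stmt4.Gf n φ' ‖y‖ ≤ Stmt4.Gf n φ' r := by
        intro y hy
        refine Stmt4.Gf_anti n φ' ?_
        have h2 : ‖x‖ - ‖y‖ ≤ dist y x := by
          rw [dist_comm, dist_eq_norm]; exact norm_sub_norm_le x y
        have := mem_ball.1 hy
        linarith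
      have hint2 : ∫⁻ y in ball x r, Stmt4.Gf n φ' ‖y‖
          ≤ Stmt4.Gf n φ' r * volume (ball x r) := by
        rw [← setLIntegral_const]
        refine lintegral_mono_ae ?_
        filter_upwards [ae_restrict_mem measurableSet_ball] with y hy
        exact hGy y hy
      have hvol : volume (ball x r) = ENNReal.ofReal (r^n) * ω := by
        have h := Measure.addHaar_ball (volume : Measure (EuclideanSpace ℝ (Fin n))) x hr.le
        rwa [finrank_euclideanSpace_fin] at h
      have hrexp : ENNReal.ofReal (r ^ (lam - (n:ℝ))) * ENNReal.ofReal (r^n)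
          = ENNReal.ofReal (r ^ lam) := by
        rw [← ENNReal.ofReal_mul (Real.rpow_nonneg hr.le _)]
        congr 1
        rw [← Real.rpow_natCast r n, ← Real.rpow_add hr, sub_add_cancel]
      have hGr : ENNReal.ofReal (r ^ lam) * Stmt4.Gf n φ' r ≤ C₁ * Stmt4.Sf n lam φ' := by
        simp only [Stmt4.Gf, ENNReal.mul_iSup]
        refine iSup_le fun t => iSup_le fun htc => ?_
        obtain ⟨hrt, ht⟩ := htc
        calc ENNReal.ofReal (r ^ lam) * ((ENNReal.ofReal (t^n))⁻¹ * Stmt4.If n φ' t)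
            ≤ ENNReal.ofReal (t ^ lam) * ((ENNReal.ofReal (t^n))⁻¹ * Stmt4.If n φ' t) :=
              mul_le_mul_left (ENNReal.ofReal_le_ofReal
                (Real.rpow_le_rpow hr.le hrt hlam0.le)) _
          _ = ENNReal.ofReal (t ^ (lam - (n:ℝ))) * Stmt4.If n φ' t := by
              rw [← mul_assoc, ← ENNReal.ofReal_inv_of_pos (pow_pos ht n),
                ← ENNReal.ofReal_mul (Real.rpow_nonneg ht.le _)]
              congr 2
              rw [← Real.rpow_natCast t n, ← Real.rpow_neg ht.le, ← Real.rpow_add ht,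
                sub_eq_add_neg]
          _ ≤ C₁ * Stmt4.Sf n lam φ' := Stmt4.key1 hn h0' lam ht
      calc ENNReal.ofReal (r ^ (lam - (n:ℝ))) * ∫⁻ y in ball x r, maximalFn n f y
          ≤ ENNReal.ofReal (r ^ (lam - (n:ℝ))) * (ENNReal.ofReal ((n:ℝ) * 6^n) *
              (Stmt4.Gf n φ' r * (ENNReal.ofReal (r^n) * ω))) := by
            refine mul_le_mul_right (hMf.trans (mul_le_mul_right (hint2.trans ?_) _)) _
            rw [hvol]
        _ = ENNReal.ofReal ((n:ℝ) * 6^n) * ω *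
              ((ENNReal.ofReal (r ^ (lam - (n:ℝ))) * ENNReal.ofReal (r^n)) *
                Stmt4.Gf n φ' r) := by ring
        _ ≤ ENNReal.ofReal ((n:ℝ) * 6^n) * ω * (C₁ * Stmt4.Sf n lam φ') := by
            rw [hrexp]
            exact mul_le_mul_right hGr _
        _ = (ENNReal.ofReal ((n:ℝ) * 6^n) * ω * C₁) * Stmt4.Sf n lam φ' := by ring
        _ ≤ D * Stmt4.Sf n lam φ' := by
            refine mul_le_mul_left ?_ _
            rw [hD]
            exact mul_le_mul_right le_self_add _
    · -- ball near the origin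
      have hr3 : (0:ℝ) < 3*r := by linarith
      have hsub : ball x r ⊆ ball (0 : EuclideanSpace ℝ (Fin n)) (3*r) := by
        intro y hy
        rw [mem_ball, dist_zero_right]
        have h2 : ‖y‖ - ‖x‖ ≤ dist y x := by
          rw [dist_eq_norm]; exact norm_sub_norm_le y x
        have := mem_ball.1 hy
        linarith
      have hint2 : ∫⁻ y in ball x r, Stmt4.Gf n φ' ‖y‖
          ≤ (n : ℝ≥0∞) * ω * (Stmt4.Lf n φ' (3*r)
              + ENNReal.ofReal ((n:ℝ)⁻¹) * Stmt4.If n φ' (3*r)) := by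
        calc ∫⁻ y in ball x r, Stmt4.Gf n φ' ‖y‖
            ≤ ∫⁻ y in ball (0 : EuclideanSpace ℝ (Fin n)) (3*r), Stmt4.Gf n φ' ‖y‖ :=
              lintegral_mono' (Measure.restrict_mono hsub le_rfl) le_rfl
          _ = (n : ℝ≥0∞) * ω * ∫⁻ ρ in Ioo (0:ℝ) (3*r),
                ENNReal.ofReal (ρ^(n-1)) * Stmt4.Gf n φ' ρ :=
              Stmt4.polar_ball hn (Stmt4.Gf n φ') (Stmt4.Gf_meas n φ') (3*r)
          _ ≤ _ := mul_le_mul_right (Stmt4.int_G hn hφ'm h0' hanti' hr3) _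
      have hrsplit : ENNReal.ofReal (r ^ (lam - (n:ℝ)))
          = ENNReal.ofReal (3^((n:ℝ)-lam)) * ENNReal.ofReal ((3*r) ^ (lam - (n:ℝ))) := by
        rw [← ENNReal.ofReal_mul (by positivity)]
        congr 1
        rw [Real.mul_rpow (by norm_num) hr.le, ← mul_assoc, ← Real.rpow_add (by norm_num)]
        norm_num
      have hLle : ENNReal.ofReal ((3*r) ^ (lam - (n:ℝ))) * Stmt4.Lf n φ' (3*r)
          ≤ Stmt4.Sf n lam φ' :=
        le_iSup_of_le (3*r) (le_iSup_of_le hr3 le_rfl)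
      have hIle : ENNReal.ofReal ((3*r) ^ (lam - (n:ℝ))) * Stmt4.If n φ' (3*r)
          ≤ C₁ * Stmt4.Sf n lam φ' := Stmt4.key1 hn h0' lam hr3
      calc ENNReal.ofReal (r ^ (lam - (n:ℝ))) * ∫⁻ y in ball x r, maximalFn n f y
          ≤ ENNReal.ofReal (r ^ (lam - (n:ℝ))) * (ENNReal.ofReal ((n:ℝ) * 6^n) *
              ((n : ℝ≥0∞) * ω * (Stmt4.Lf n φ' (3*r)
                + ENNReal.ofReal ((n:ℝ)⁻¹) * Stmt4.If n φ' (3*r)))) :=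
            mul_le_mul_right (hMf.trans (mul_le_mul_right hint2 _)) _
        _ = ENNReal.ofReal ((n:ℝ) * 6^n) * ω * ((n : ℝ≥0∞) * ENNReal.ofReal (3^((n:ℝ)-lam)) *
              (ENNReal.ofReal ((3*r) ^ (lam - (n:ℝ))) * Stmt4.Lf n φ' (3*r)
                + ENNReal.ofReal ((n:ℝ)⁻¹) *
                  (ENNReal.ofReal ((3*r) ^ (lam - (n:ℝ))) * Stmt4.If n φ' (3*r)))) := by
            rw [hrsplit]; ring
        _ ≤ ENNReal.ofReal ((n:ℝ) * 6^n) * ω * ((n : ℝ≥0∞) * ENNReal.ofReal (3^((n:ℝ)-lam)) *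
              (Stmt4.Sf n lam φ' + ENNReal.ofReal ((n:ℝ)⁻¹) * (C₁ * Stmt4.Sf n lam φ'))) := by
            refine mul_le_mul_right (mul_le_mul_right (add_le_add hLle
              (mul_le_mul_right hIle _)) _) _
        _ = ENNReal.ofReal ((n:ℝ) * 6^n) * ω * ((n : ℝ≥0∞) * ENNReal.ofReal (3^((n:ℝ)-lam)) *
              (1 + ENNReal.ofReal ((n:ℝ)⁻¹) * C₁)) * Stmt4.Sf n lam φ' := by ring
        _ ≤ D * Stmt4.Sf n lam φ' := by
            refine mul_le_mul_left ?_ _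
            rw [hD]
            calc ENNReal.ofReal ((n:ℝ) * 6^n) * ω * ((n : ℝ≥0∞) *
                  ENNReal.ofReal (3^((n:ℝ)-lam)) * (1 + ENNReal.ofReal ((n:ℝ)⁻¹) * C₁))
                ≤ ENNReal.ofReal ((n:ℝ) * 6^n) * ω * (C₁ + (n : ℝ≥0∞) *
                  ENNReal.ofReal (3^((n:ℝ)-lam)) * (1 + ENNReal.ofReal ((n:ℝ)⁻¹) * C₁)) :=
                mul_le_mul_right le_add_self _
              _ = _ := rfl
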